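/- Let f : ℝⁿ → ℝⁿ, let T > 0, let γ : [0,T] → ℝⁿ be differentiable with γ'(t) = f(γ t) for all t ∈ [0,T], and let Γ_γ ∈ H be an occupation kernel of γ. Assume every ι g for g ∈ H is differentiable on ℝⁿ. Then for every g ∈ D(A_f): ⟪A_f g, Γ_γ⟫ = (ι g)(γ T) − (ι g)(γ 0) = ⟪g, k(γ T) − k(γ 0)⟫. In particular |⟪A_f g, Γ_γ⟫| ≤ ‖g‖ · ‖k(γ T) − k(γ 0)‖ for all g ∈ D(A_f), so the adjoint of A_f maps Γ_γ to k(γ T) − k(γ 0). -/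

import Mathlib

open scoped RealInnerProductSpace

/-- If `γ` solves `γ' = f ∘ γ` on `[0,T]` with occupation kernel `Γ`, then for every
`g ∈ D(A_f)` (with image `Ag = A_f g`) one has
`⟪A_f g, Γ⟫ = (ι g)(γ T) − (ι g)(γ 0) = ⟪g, k (γ T) − k (γ 0)⟫`, and in particular
`|⟪A_f g, Γ⟫| ≤ ‖g‖ ⬝ ‖k (γ T) − k (γ 0)‖`; so `A_f* Γ = k (γ T) − k (γ 0)`. -/
theorem adjoint_liouville_on_occupation_kernel
    {n : ℕ} (hn : 1 ≤ n) {H : Type*} [NormedAddCommGroup H] [InnerProductSpace ℝ H]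
    [CompleteSpace H]
    (ι : H →ₗ[ℝ] (EuclideanSpace ℝ (Fin n) → ℝ)) (hι : Function.Injective ι)
    (k : EuclideanSpace ℝ (Fin n) → H)
    (hrep : ∀ (g : H) (x : EuclideanSpace ℝ (Fin n)), ι g x = ⟪g, k x⟫)
    (f : EuclideanSpace ℝ (Fin n) → EuclideanSpace ℝ (Fin n))
    (T : ℝ) (hT : 0 < T)
    (γ : ℝ → EuclideanSpace ℝ (Fin n))
    (hγ : ∀ t ∈ Set.Icc (0:ℝ) T, HasDerivAt γ (f (γ t)) t)
    (Γ : H) (hΓ : ∀ g : H, ⟪g, Γ⟫ = ∫ t in (0:ℝ)..T, ι g (γ t))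
    (hdiff : ∀ (g : H) (x : EuclideanSpace ℝ (Fin n)), DifferentiableAt ℝ (ι g) x) :
    ∀ g Ag : H, (∀ x : EuclideanSpace ℝ (Fin n), ι Ag x = fderiv ℝ (ι g) x (f x)) →
      ⟪Ag, Γ⟫ = ι g (γ T) - ι g (γ 0) ∧
      ι g (γ T) - ι g (γ 0) = ⟪g, k (γ T) - k (γ 0)⟫ ∧
      |⟪Ag, Γ⟫| ≤ ‖g‖ * ‖k (γ T) - k (γ 0)‖ := by
  intro g Ag hAg
  have hγcont : ContinuousOn γ (Set.Icc 0 T) := fun t ht =>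
    (hγ t ht).continuousAt.continuousWithinAt
  have hderiv : ∀ t ∈ Set.uIcc (0:ℝ) T, HasDerivAt (fun t => ι g (γ t)) (ι Ag (γ t)) t := by
    intro t ht
    rw [Set.uIcc_of_le hT.le] at ht
    have h1 : HasFDerivAt (ι g) (fderiv ℝ (ι g) (γ t)) (γ t) := (hdiff g (γ t)).hasFDerivAt
    have := h1.comp_hasDerivAt t (hγ t ht)
    rw [hAg (γ t)]
    exact this
  have hint : IntervalIntegrable (fun t => ι Ag (γ t)) MeasureTheory.volume 0 T := by
    apply ContinuousOn.intervalIntegrable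
    rw [Set.uIcc_of_le hT.le]
    have : Differentiable ℝ (ι Ag) := hdiff Ag
    exact (this.continuous.comp_continuousOn hγcont :)
  have key : ∫ t in (0:ℝ)..T, ι Ag (γ t) = ι g (γ T) - ι g (γ 0) :=
    intervalIntegral.integral_eq_sub_of_hasDerivAt hderiv hint
  have h1 : ⟪Ag, Γ⟫ = ι g (γ T) - ι g (γ 0) := by rw [hΓ Ag, key]
  have h2 : ι g (γ T) - ι g (γ 0) = ⟪g, k (γ T) - k (γ 0)⟫ := by
    rw [hrep g (γ T), hrep g (γ 0), inner_sub_right]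
  refine ⟨h1, h2, ?_⟩
  rw [h1, h2]
  exact abs_real_inner_le_norm g _
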